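/- The norm on H₋ is characterized by a limit of resolvents: for f in L²₀, ‖f‖₋² = lim_{λ↓0} ⟨f, (λI + S)^{-1} f⟩, where the limit exists in [0,∞] and is finite exactly when f ∈ Dom(S^{-1/2}), in which case it equals ‖S^{-1/2} f‖². -/

import Mathlib

open MeasureTheory Filter Topology RealInnerProductSpace

/-- The range of an injective self-adjoint operator is dense. -/
lemma aux_dense_range {H : Type*} [NormedAddCommGroup H] [InnerProductSpace ℝ H]
    [CompleteSpace H] (S : H →L[ℝ] H) (hSsa : IsSelfAdjoint S)
    (hSker : LinearMap.ker (S : H →ₗ[ℝ] H) = ⊥) (x : H) :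
    x ∈ closure (Set.range S) := by
  have hKo : (LinearMap.range (S : H →ₗ[ℝ] H))ᗮ = ⊥ := by
    rw [Submodule.eq_bot_iff]
    intro v hv
    have h1 : ⟪S (S v), v⟫ = 0 := hv (S (S v)) ⟨S v, rfl⟩
    have h2 : ⟪S v, S v⟫ = 0 := (hSsa.isSymmetric (S v) v).symm.trans h1
    have h3 : S v = 0 := inner_self_eq_zero.mp h2
    have h4 : v ∈ LinearMap.ker (S : H →ₗ[ℝ] H) := h3
    rw [hSker] at h4
    exact h4
  have hcl : (LinearMap.range (S : H →ₗ[ℝ] H)).topologicalClosure = ⊤ := by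
    rw [← Submodule.orthogonal_orthogonal_eq_closure, hKo, Submodule.bot_orthogonal_eq_top]
  have hx : x ∈ ((LinearMap.range (S : H →ₗ[ℝ] H)).topologicalClosure : Set H) := by
    rw [hcl]; trivial
  rw [Submodule.topologicalClosure_coe] at hx
  simpa [LinearMap.coe_range] using hx

/-- for a bounded nonnegative self-adjoint operator `S` with trivial kernel,
with nonnegative square root `Q` (`Q² = S`, so `Dom(S^{-1/2}) = Ran Q`) and resolvents
`Rres λ = (λI + S)⁻¹`, the limit `lim_{λ↓0} ⟨f, (λI+S)^{-1} f⟩` equals `‖S^{-1/2} f‖²`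
when `f = Q g ∈ Ran Q = Dom(S^{-1/2})` (in which case `S^{-1/2}f = g`), and the limit is
`+∞` when `f ∉ Ran Q`. -/
theorem Hminus_norm_resolvent_characterisation
    (H : Type*) [NormedAddCommGroup H] [InnerProductSpace ℝ H] [CompleteSpace H]
    (S : H →L[ℝ] H) (hSsa : IsSelfAdjoint S)
    (hSpos : ∀ f : H, 0 ≤ ⟪S f, f⟫)
    (hSker : LinearMap.ker (S : H →ₗ[ℝ] H) = ⊥)
    (Q : H →L[ℝ] H) (hQsa : IsSelfAdjoint Q)
    (hQpos : ∀ f : H, 0 ≤ ⟪Q f, f⟫)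
    (hQsq : Q ∘L Q = S)
    (Rres : ℝ → H →L[ℝ] H)
    (hRres : ∀ l : ℝ, 0 < l →
      (l • (1 : H →L[ℝ] H) + S) ∘L Rres l = 1 ∧ Rres l ∘L (l • (1 : H →L[ℝ] H) + S) = 1)
    (f : H) :
    (∀ g : H, f = Q g →
      Tendsto (fun l : ℝ => ⟪f, Rres l f⟫) (nhdsWithin 0 (Set.Ioi 0)) (𝓝 (‖g‖ ^ 2))) ∧
    (f ∉ Set.range Q →
      Tendsto (fun l : ℝ => ⟪f, Rres l f⟫) (nhdsWithin 0 (Set.Ioi 0)) atTop) := by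
  -- Basic pointwise identities for the resolvent
  have happ : ∀ l : ℝ, 0 < l → ∀ x : H, l • Rres l x + S (Rres l x) = x := by
    intro l hl x
    have h := congrArg (fun T : H →L[ℝ] H => T x) (hRres l hl).1
    simpa [ContinuousLinearMap.add_apply, ContinuousLinearMap.comp_apply,
      ContinuousLinearMap.smul_apply] using h
  have happ' : ∀ l : ℝ, 0 < l → ∀ x : H, Rres l (l • x + S x) = x := by
    intro l hl x
    have h := congrArg (fun T : H →L[ℝ] H => T x) (hRres l hl).2
    simpa [ContinuousLinearMap.add_apply, ContinuousLinearMap.comp_apply,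
      ContinuousLinearMap.smul_apply] using h
  have hQQ : ∀ x : H, Q (Q x) = S x := by
    intro x
    have h := congrArg (fun T : H →L[ℝ] H => T x) hQsq
    simpa using h
  -- quadratic expansion of ⟪x, R_l x⟫
  have expand : ∀ l : ℝ, 0 < l → ∀ x : H,
      ⟪x, Rres l x⟫ = l * ‖Rres l x‖ ^ 2 + ⟪S (Rres l x), Rres l x⟫ := by
    intro l hl x
    have h1 : ⟪l • Rres l x + S (Rres l x), Rres l x⟫
        = l * ‖Rres l x‖ ^ 2 + ⟪S (Rres l x), Rres l x⟫ := by
      rw [inner_add_left, real_inner_smul_left, real_inner_self_eq_norm_sq]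
    rw [happ l hl x] at h1
    exact h1
  have hφpos : ∀ l : ℝ, 0 < l → 0 ≤ ⟪f, Rres l f⟫ := by
    intro l hl
    rw [expand l hl f]
    have := hSpos (Rres l f)
    nlinarith [sq_nonneg ‖Rres l f‖]
  -- norm bound: l * ‖R_l x‖ ≤ ‖x‖
  have hnorm : ∀ l : ℝ, 0 < l → ∀ x : H, l * ‖Rres l x‖ ≤ ‖x‖ := by
    intro l hl x
    have e := expand l hl x
    have h1 : l * ‖Rres l x‖ ^ 2 ≤ ‖x‖ * ‖Rres l x‖ := by
      have := hSpos (Rres l x)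
      have h2 := real_inner_le_norm x (Rres l x)
      linarith
    rcases eq_or_lt_of_le (norm_nonneg (Rres l x)) with h | h
    · rw [← h]; simpa using norm_nonneg x
    · have := (mul_le_mul_iff_of_pos_right h).mp (by nlinarith : (l * ‖Rres l x‖) * ‖Rres l x‖ ≤ ‖x‖ * ‖Rres l x‖)
      exact this
  -- the key monotonicity/Cauchy estimates
  have key : ∀ l μ : ℝ, 0 < l → 0 < μ → l ≤ μ →
      ⟪f, Rres μ f⟫ ≤ ⟪f, Rres l f⟫ ∧
      ‖Q (Rres l f) - Q (Rres μ f)‖ ^ 2 ≤ ⟪f, Rres l f⟫ - ⟪f, Rres μ f⟫ := by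
    intro l μ hl hμ hlμ
    have hu : l • Rres l f + S (Rres l f) = f := happ l hl f
    have hv : μ • Rres μ f + S (Rres μ f) = f := happ μ hμ f
    set u := Rres l f with hu'
    set v := Rres μ f with hv'
    have e1 : ⟪f, u⟫ = l * ‖u‖ ^ 2 + ⟪S u, u⟫ := by
      have h1 : ⟪l • u + S u, u⟫ = l * ‖u‖ ^ 2 + ⟪S u, u⟫ := by
        rw [inner_add_left, real_inner_smul_left, real_inner_self_eq_norm_sq]
      rw [hu] at h1; exact h1
    have e2 : ⟪f, v⟫ = μ * ‖v‖ ^ 2 + ⟪S v, v⟫ := by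
      have h1 : ⟪μ • v + S v, v⟫ = μ * ‖v‖ ^ 2 + ⟪S v, v⟫ := by
        rw [inner_add_left, real_inner_smul_left, real_inner_self_eq_norm_sq]
      rw [hv] at h1; exact h1
    have e3 : ⟪f, v⟫ = l * ⟪u, v⟫ + ⟪S u, v⟫ := by
      have h1 : ⟪l • u + S u, v⟫ = l * ⟪u, v⟫ + ⟪S u, v⟫ := by
        rw [inner_add_left, real_inner_smul_left]
      rw [hu] at h1; exact h1
    have esym : ⟪S v, u⟫ = ⟪S u, v⟫ := by
      have h1 : ⟪S v, u⟫ = ⟪v, S u⟫ := hSsa.isSymmetric v u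
      rw [h1, real_inner_comm]
    have e4 : ⟪f, u⟫ = μ * ⟪u, v⟫ + ⟪S u, v⟫ := by
      have h1 : ⟪μ • v + S v, u⟫ = μ * ⟪v, u⟫ + ⟪S v, u⟫ := by
        rw [inner_add_left, real_inner_smul_left]
      rw [hv] at h1
      rw [h1, esym, real_inner_comm v u]
    have e5 : ⟪S (u - v), u - v⟫ = ⟪S u, u⟫ - 2 * ⟪S u, v⟫ + ⟪S v, v⟫ := by
      rw [map_sub, inner_sub_left, inner_sub_right, inner_sub_right, esym]
      ring
    have e6 : ‖Q u - Q v‖ ^ 2 = ⟪S (u - v), u - v⟫ := by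
      have h1 : ⟪Q (u - v), Q (u - v)⟫ = ⟪u - v, Q (Q (u - v))⟫ :=
        hQsa.isSymmetric (u - v) (Q (u - v))
      rw [← map_sub, ← real_inner_self_eq_norm_sq, h1, hQQ, real_inner_comm]
    have e7 : ‖u - v‖ ^ 2 = ‖u‖ ^ 2 - 2 * ⟪u, v⟫ + ‖v‖ ^ 2 := norm_sub_sq_real u v
    have keyid : ⟪f, u⟫ - ⟪f, v⟫
        = ⟪S (u - v), u - v⟫ + l * ‖u - v‖ ^ 2 + (μ - l) * ‖v‖ ^ 2 := by
      rw [e5, e7]; nlinarith [e1, e2, e3, e4]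
    have pS : 0 ≤ ⟪S (u - v), u - v⟫ := hSpos (u - v)
    have pl : 0 ≤ l * ‖u - v‖ ^ 2 := mul_nonneg hl.le (sq_nonneg _)
    have pb : 0 ≤ (μ - l) * ‖v‖ ^ 2 := mul_nonneg (by linarith) (sq_nonneg _)
    constructor
    · linarith
    · rw [e6]; linarith
  constructor
  · -- part 1 : f = Q g
    intro g hg
    -- identity: ⟪f, R_l f⟫ = ‖g‖² - l ⟪g, R_l g⟫
    have hkey : ∀ l : ℝ, 0 < l → ⟪f, Rres l f⟫ = ‖g‖ ^ 2 - l * ⟪g, Rres l g⟫ := by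
      intro l hl
      have hz : l • Rres l g + S (Rres l g) = g := happ l hl g
      have hSz : S (Rres l g) = g - l • Rres l g := eq_sub_of_add_eq' hz
      have hcommS : S (Q (Rres l g)) = Q (S (Rres l g)) := by
        rw [← hQQ (Rres l g), ← hQQ (Q (Rres l g))]
      have hw : Rres l (Q g) = Q (Rres l g) := by
        have h1 : l • Q (Rres l g) + S (Q (Rres l g)) = Q g := by
          rw [hcommS, ← Q.map_smul, ← Q.map_add, hz]
        rw [← h1, happ' l hl]
      have h2 : ⟪Q g, Q (Rres l g)⟫ = ⟪g, Q (Q (Rres l g))⟫ :=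
        hQsa.isSymmetric g (Q (Rres l g))
      rw [hg, hw, h2, hQQ, hSz, inner_sub_right,
        real_inner_smul_right, real_inner_self_eq_norm_sq]
    -- the error term tends to zero
    have hzero : Tendsto (fun l : ℝ => l * ⟪g, Rres l g⟫) (nhdsWithin 0 (Set.Ioi 0)) (𝓝 0) := by
      rw [Metric.tendsto_nhdsWithin_nhds]
      intro ε hε
      set ε' : ℝ := ε / (2 * (‖g‖ + 1)) with hε'def
      have hε' : 0 < ε' := by positivity
      obtain ⟨y, hy, hyd⟩ := Metric.mem_closure_iff.mp (aux_dense_range S hSsa hSker g) ε' hε'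
      obtain ⟨h, rfl⟩ := hy
      rw [dist_eq_norm] at hyd
      set δ : ℝ := ε' / (2 * (‖h‖ + 1)) with hδdef
      refine ⟨δ, by positivity, ?_⟩
      intro l hl hld
      have hl0 : 0 < l := hl
      have hlδ : l < δ := by
        rw [Real.dist_eq, sub_zero, abs_of_pos hl0] at hld
        exact hld
      -- bound l ‖R_l g‖
      have hsplit : Rres l g = Rres l (g - S h) + Rres l (S h) := by
        rw [← map_add]; congr 1; abel
      have hRS : Rres l (S h) = h - l • Rres l h := by
        have h3 := happ' l hl0 h
        have h2 : Rres l (l • h + S h) = l • Rres l h + Rres l (S h) := by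
          rw [(Rres l).map_add, (Rres l).map_smul]
        rw [h2] at h3
        exact eq_sub_of_add_eq' h3
      have b1 : l * ‖Rres l (g - S h)‖ ≤ ‖g - S h‖ := hnorm l hl0 _
      have b2 : ‖Rres l (S h)‖ ≤ ‖h‖ + ‖l • Rres l h‖ := by
        rw [hRS]; exact norm_sub_le _ _
      have b3 : ‖l • Rres l h‖ ≤ ‖h‖ := by
        rw [norm_smul, Real.norm_eq_abs, abs_of_pos hl0]
        exact hnorm l hl0 h
      have hb : ‖Rres l g‖ ≤ ‖Rres l (g - S h)‖ + ‖Rres l (S h)‖ := by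
        rw [hsplit]; exact norm_add_le _ _
      have b4 : l * ‖Rres l g‖ ≤ ε' + 2 * (l * ‖h‖) := by
        have c1 : l * ‖Rres l g‖ ≤ l * ‖Rres l (g - S h)‖ + l * ‖Rres l (S h)‖ := by
          rw [← mul_add]
          exact mul_le_mul_of_nonneg_left hb hl0.le
        have c3 : l * ‖Rres l (S h)‖ ≤ l * (‖h‖ + ‖l • Rres l h‖) :=
          mul_le_mul_of_nonneg_left b2 hl0.le
        have c4 : l * ‖l • Rres l h‖ ≤ l * ‖h‖ := mul_le_mul_of_nonneg_left b3 hl0.le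
        rw [mul_add] at c3
        linarith
      have b5 : 2 * (l * ‖h‖) ≤ ε' := by
        have h2 : (0:ℝ) < 2 * (‖h‖ + 1) := by positivity
        have c1 : l * (2 * (‖h‖ + 1)) < δ * (2 * (‖h‖ + 1)) :=
          mul_lt_mul_of_pos_right hlδ h2
        have c2 : δ * (2 * (‖h‖ + 1)) = ε' := by rw [hδdef]; field_simp
        have c3 : l * (2 * (‖h‖ + 1)) = 2 * (l * ‖h‖) + 2 * l := by ring
        linarith
      have b6 : l * ‖Rres l g‖ ≤ 2 * ε' := by linarith
      have habs : |l * ⟪g, Rres l g⟫| ≤ l * (‖g‖ * ‖Rres l g‖) := by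
        rw [abs_mul, abs_of_pos hl0]
        exact mul_le_mul_of_nonneg_left (abs_real_inner_le_norm g (Rres l g)) hl0.le
      have hfin : |l * ⟪g, Rres l g⟫| < ε := by
        have h1 : l * (‖g‖ * ‖Rres l g‖) = ‖g‖ * (l * ‖Rres l g‖) := by ring
        have h2 : ‖g‖ * (l * ‖Rres l g‖) ≤ ‖g‖ * (2 * ε') :=
          mul_le_mul_of_nonneg_left b6 (norm_nonneg g)
        have h3 : ‖g‖ * (2 * ε') < ε := by
          rw [hε'def]
          have hg1 : (0:ℝ) < ‖g‖ + 1 := by positivity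
          rw [show (2:ℝ) * (ε / (2 * (‖g‖ + 1))) = ε / (‖g‖ + 1) by field_simp]
          have h4 : ‖g‖ * (ε / (‖g‖ + 1)) < (‖g‖ + 1) * (ε / (‖g‖ + 1)) :=
            mul_lt_mul_of_pos_right (by linarith) (by positivity)
          have h5 : (‖g‖ + 1) * (ε / (‖g‖ + 1)) = ε := by field_simp
          linarith
        linarith
      rw [Real.dist_eq, sub_zero]
      exact hfin
    have hconst : Tendsto (fun _ : ℝ => ‖g‖ ^ 2) (nhdsWithin 0 (Set.Ioi 0)) (𝓝 (‖g‖ ^ 2)) :=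
      tendsto_const_nhds
    have := hconst.sub hzero
    rw [sub_zero] at this
    refine this.congr' ?_
    filter_upwards [self_mem_nhdsWithin] with l hl
    exact (hkey l hl).symm
  · -- part 2 : f ∉ range Q
    intro hf
    by_contra hdiv
    -- boundedness of φ
    have hbdd : ∃ C : ℝ, ∀ l : ℝ, 0 < l → ⟪f, Rres l f⟫ ≤ C := by
      by_contra hC
      push_neg at hC
      apply hdiv
      rw [tendsto_atTop]
      intro b
      obtain ⟨l₀, hl₀, hb⟩ := hC b
      filter_upwards [Ioo_mem_nhdsGT_of_mem (Set.left_mem_Ico.mpr hl₀)] with l hl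
      exact le_trans hb.le (key l l₀ hl.1 hl₀ hl.2.le).1
    obtain ⟨C, hC⟩ := hbdd
    have hC0 : 0 ≤ C := le_trans (hφpos 1 one_pos) (hC 1 one_pos)
    -- the sequence
    set a : ℕ → ℝ := fun n => 1 / (n + 1) with ha_def
    have ha : ∀ n : ℕ, 0 < a n := by
      intro n; positivity
    have hamono : ∀ n m : ℕ, n ≤ m → a m ≤ a n := by
      intro n m hnm
      apply one_div_le_one_div_of_le (by positivity)
      have : (n : ℝ) ≤ m := Nat.cast_le.mpr hnm
      linarith
    set ph : ℕ → ℝ := fun n => ⟪f, Rres (a n) f⟫ with hph_def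
    have hmono : Monotone ph := by
      intro n m hnm
      exact (key (a m) (a n) (ha m) (ha n) (hamono n m hnm)).1
    have hbdA : BddAbove (Set.range ph) := by
      refine ⟨C, ?_⟩
      rintro x ⟨n, rfl⟩
      exact hC (a n) (ha n)
    have hL := tendsto_atTop_ciSup hmono hbdA
    set L : ℝ := ⨆ n, ph n with hL_def
    have hle : ∀ n, ph n ≤ L := fun n => le_ciSup hbdA n
    -- Cauchy sequence h n = Q (R_{a n} f)
    set hs : ℕ → H := fun n => Q (Rres (a n) f) with hs_def
    have hcauchy : CauchySeq hs := by
      apply cauchySeq_of_le_tendsto_0 (fun N => Real.sqrt (L - ph N))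
      · intro n m N hn hm
        -- wlog n ≤ m via cases
        have main : ∀ p q : ℕ, N ≤ p → p ≤ q → dist (hs p) (hs q) ≤ Real.sqrt (L - ph N) := by
          intro p q hNp hpq
          have h2 := (key (a q) (a p) (ha q) (ha p) (hamono p q hpq)).2
          -- ‖Q R_{a q} f - Q R_{a p} f‖² ≤ ph q - ph p
          have h3 : ‖hs q - hs p‖ ^ 2 ≤ L - ph N := by
            have := hle q
            have := hmono hNp
            simp only [hs_def, hph_def] at *
            linarith
          rw [dist_eq_norm, ← norm_neg, neg_sub]
          exact (Real.le_sqrt (norm_nonneg _) (sub_nonneg.mpr (hle N))).mpr h3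
        rcases le_total n m with h | h
        · exact main n m hn h
        · rw [dist_comm]; exact main m n hm h
      · have h1 : Tendsto (fun N => L - ph N) atTop (𝓝 0) := by
          have h := (tendsto_const_nhds (x := L) (f := atTop (α := ℕ))).sub hL
          rw [sub_self] at h
          exact h
        have h4 := (Real.continuous_sqrt.tendsto 0).comp h1
        rw [Real.sqrt_zero] at h4
        exact h4
    obtain ⟨hlim, hhlim⟩ := cauchySeq_tendsto_of_complete hcauchy
    -- Q hlim = f
    have hQh : ∀ n, Q (hs n) = f - a n • Rres (a n) f := by
      intro n
      have h1 := happ (a n) (ha n) f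
      simp only [hs_def]
      rw [hQQ]
      exact eq_sub_of_add_eq' h1
    have herr : Tendsto (fun n => a n • Rres (a n) f) atTop (𝓝 (0 : H)) := by
      rw [tendsto_zero_iff_norm_tendsto_zero]
      apply squeeze_zero (fun n => norm_nonneg _) (g := fun n => Real.sqrt (a n * C))
      · intro n
        have e := expand (a n) (ha n) f
        have hSp := hSpos (Rres (a n) f)
        have hb : a n * ‖Rres (a n) f‖ ^ 2 ≤ C := by
          have := hC (a n) (ha n)
          linarith
        have : ‖a n • Rres (a n) f‖ ^ 2 ≤ a n * C := by
          rw [norm_smul, Real.norm_eq_abs, abs_of_pos (ha n), mul_pow]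
          have han := (ha n).le
          nlinarith [sq_nonneg ‖Rres (a n) f‖]
        exact (Real.le_sqrt (norm_nonneg _) (mul_nonneg (ha n).le hC0)).mpr this
      · have h0 : Tendsto a atTop (𝓝 0) := by
          rw [ha_def]; exact tendsto_one_div_add_atTop_nhds_zero_nat
        have h1 := h0.mul_const C
        rw [zero_mul] at h1
        have h4 := (Real.continuous_sqrt.tendsto 0).comp h1
        rw [Real.sqrt_zero] at h4
        exact h4
    have h1 : Tendsto (fun n => Q (hs n)) atTop (𝓝 (Q hlim)) :=
      (Q.continuous.tendsto _).comp hhlim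
    have h2 : Tendsto (fun n => Q (hs n)) atTop (𝓝 f) := by
      have h3 : Tendsto (fun n => f - a n • Rres (a n) f) atTop (𝓝 f) := by
        have h5 := (tendsto_const_nhds (x := f) (f := atTop (α := ℕ))).sub herr
        rw [sub_zero] at h5
        exact h5
      exact h3.congr (fun n => (hQh n).symm)
    have : Q hlim = f := tendsto_nhds_unique h1 h2
    exact hf ⟨hlim, this⟩
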